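/- arXiv:1203.3217 — 2 statements merged into one kernel-verified Lean document; each statement's English description precedes it below -/
import Mathlib

section
/- For any two pmfs p_X and p_{X̂} on the same finite alphabet X with at least 2 elements, the absolute difference of their Shannon entropies satisfies |H(X) - H(X̂)| ≤ d·log(|X| - 1) + h_b(d), where d is the total variation distance between p_X and p_{X̂} and h_b is the binary entropy function. -/
open Finset

/-- Total variation distance between two pmfs on a finite set: half the ℓ¹ distance. -/
noncomputable def TV {α : Type*} [Fintype α] (p q : α → ℝ) : ℝ :=
  (∑ a, |p a - q a|) / 2

/-- Shannon entropy of a pmf. -/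
noncomputable def ent {α : Type*} [Fintype α] (p : α → ℝ) : ℝ :=
  -∑ a, p a * Real.log (p a)

/-- Binary entropy function. -/
noncomputable def hb (t : ℝ) : ℝ := -t * Real.log t - (1 - t) * Real.log (1 - t)

/-- `p` is a probability mass function. -/
def IsPMF {α : Type*} [Fintype α] (p : α → ℝ) : Prop :=
  (∀ a, 0 ≤ p a) ∧ ∑ a, p a = 1

/-- Pushforward pmf (distribution of the random variable `X` under `μ`). -/
noncomputable def pushf {Ω α : Type*} [Fintype Ω] [DecidableEq α]
    (μ : Ω → ℝ) (X : Ω → α) : α → ℝ :=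
  fun a => ∑ ω ∈ Finset.univ.filter (fun ω => X ω = a), μ ω

/-- Entropy of a random variable `X` on a finite probability space with pmf `μ`. -/
noncomputable def Hent {Ω α : Type*} [Fintype Ω] [Fintype α] [DecidableEq α]
    (μ : Ω → ℝ) (X : Ω → α) : ℝ := ent (pushf μ X)

/-- Conditional mutual information `I(A ; C | B)` of random variables on a finite
probability space with pmf `μ`, defined via entropies:
`I(A;C|B) = H(A,B) + H(B,C) - H(A,B,C) - H(B)`. -/
noncomputable def condMI {Ω α β γ : Type*} [Fintype Ω] [Fintype α] [Fintype β] [Fintype γ]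
    [DecidableEq α] [DecidableEq β] [DecidableEq γ]
    (μ : Ω → ℝ) (A : Ω → α) (B : Ω → β) (C : Ω → γ) : ℝ :=
  Hent μ (fun ω => (A ω, B ω)) + Hent μ (fun ω => (B ω, C ω))
    - Hent μ (fun ω => (A ω, B ω, C ω)) - Hent μ B

lemma tangent {a b c : ℝ} (ha : 0 ≤ a) (hab : a ≤ b) (hc : 0 < c) :
    a * Real.log b - a * Real.log a ≤ a * Real.log c + b / c - a := by
  rcases eq_or_lt_of_le ha with h0 | h0
  · rw [← h0]
    have : 0 ≤ b / c := div_nonneg (le_trans ha hab) hc.le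
    simp; linarith
  · have hb : 0 < b := lt_of_lt_of_le h0 hab
    have hkey : Real.log (b / (a * c)) ≤ b / (a * c) - 1 :=
      Real.log_le_sub_one_of_pos (by positivity)
    rw [Real.log_div hb.ne' (by positivity), Real.log_mul h0.ne' hc.ne'] at hkey
    have h2 : a * (Real.log b - (Real.log a + Real.log c)) ≤ a * (b / (a * c) - 1) :=
      mul_le_mul_of_nonneg_left hkey ha
    have h3 : a * (b / (a * c)) = b / c := by field_simp
    nlinarith [h3]

lemma negMulLog_subadd {s t : ℝ} (hs : 0 ≤ s) (ht : 0 ≤ t) :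
    -((s + t) * Real.log (s + t)) ≤ -(s * Real.log s) - t * Real.log t := by
  have h1 : s * Real.log s ≤ s * Real.log (s + t) := by
    rcases eq_or_lt_of_le hs with h | h
    · simp [← h]
    · exact mul_le_mul_of_nonneg_left (Real.log_le_log h (by linarith)) hs
  have h2 : t * Real.log t ≤ t * Real.log (s + t) := by
    rcases eq_or_lt_of_le ht with h | h
    · simp [← h]
    · exact mul_le_mul_of_nonneg_left (Real.log_le_log h (by linarith)) ht
  nlinarith

lemma key {α : Type*} [Fintype α] (p q : α → ℝ) (hp : IsPMF p) (hq : IsPMF q)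
    (hcard : 2 ≤ Fintype.card α) :
    ent p - ent q ≤ TV p q * Real.log ((Fintype.card α : ℝ) - 1) + hb (TV p q) := by
  classical
  obtain ⟨hp0, hp1⟩ := hp
  obtain ⟨hq0, hq1⟩ := hq
  set n : ℝ := (Fintype.card α : ℝ) with hn
  have hn2 : (2:ℝ) ≤ n := by rw [hn]; exact_mod_cast hcard
  set d : ℝ := TV p q with hd
  set m : α → ℝ := fun x => min (p x) (q x) with hm
  have hm0 : ∀ x, 0 ≤ m x := fun x => le_min (hp0 x) (hq0 x)
  have hmp : ∀ x, m x ≤ p x := fun x => min_le_left _ _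
  have hmq : ∀ x, m x ≤ q x := fun x => min_le_right _ _
  have habs : ∀ x, |p x - q x| = (p x - m x) + (q x - m x) := by
    intro x
    rcases le_total (p x) (q x) with h | h
    · rw [abs_of_nonpos (by linarith)]
      have : m x = p x := min_eq_left h
      rw [this]; ring
    · rw [abs_of_nonneg (by linarith)]
      have : m x = q x := min_eq_right h
      rw [this]; ring
  have h2d : ∑ x, |p x - q x| = 2 * d := by
    have : d = (∑ x, |p x - q x|) / 2 := rfl
    linarith
  have e1 : ∑ x, |p x - q x| = 2 - 2 * ∑ x, m x := by
    rw [Finset.sum_congr rfl (fun x _ => habs x), Finset.sum_add_distrib,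
      Finset.sum_sub_distrib, Finset.sum_sub_distrib, hp1, hq1]
    ring
  have hsum_m : ∑ x, m x = 1 - d := by linarith
  have hd0 : 0 ≤ d := by
    have h := Finset.sum_nonneg (fun x (_ : x ∈ univ) => abs_nonneg (p x - q x))
    linarith
  have hd1 : d ≤ 1 := by
    have h := Finset.sum_nonneg (fun x (_ : x ∈ univ) => hm0 x)
    linarith
  have hsum_u : ∑ x, (p x - m x) = d := by
    rw [Finset.sum_sub_distrib, hp1, hsum_m]; ring
  have hsum_v : ∑ x, (q x - m x) = d := by
    rw [Finset.sum_sub_distrib, hq1, hsum_m]; ring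
  have hq_le1 : ∀ x, q x ≤ 1 := by
    intro x
    have := Finset.single_le_sum (fun i (_ : i ∈ univ) => hq0 i) (Finset.mem_univ x)
    linarith
  have hp_le1 : ∀ x, p x ≤ 1 := by
    intro x
    have := Finset.single_le_sum (fun i (_ : i ∈ univ) => hp0 i) (Finset.mem_univ x)
    linarith
  have hu_le1 : ∀ x, p x - m x ≤ 1 := fun x => by linarith [hm0 x, hp_le1 x]
  -- pointwise bound
  have pointwise : ∀ x, -(p x * Real.log (p x)) + q x * Real.log (q x) ≤
      -((p x - m x) * Real.log (p x - m x)) +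
        (m x * Real.log (q x) - m x * Real.log (m x)) := by
    intro x
    have h1 := negMulLog_subadd (hm0 x) (sub_nonneg.2 (hmp x))
    rw [show m x + (p x - m x) = p x from by ring] at h1
    have hlogq : Real.log (q x) ≤ 0 := Real.log_nonpos (hq0 x) (hq_le1 x)
    have h2 : (q x - m x) * Real.log (q x) ≤ 0 :=
      mul_nonpos_of_nonneg_of_nonpos (by linarith [hmq x]) hlogq
    nlinarith [h1, h2]
  have main : ent p - ent q ≤
      (∑ x, -((p x - m x) * Real.log (p x - m x))) +
        ∑ x, (m x * Real.log (q x) - m x * Real.log (m x)) := by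
    have e2 : ent p - ent q = ∑ x, (-(p x * Real.log (p x)) + q x * Real.log (q x)) := by
      simp only [ent]
      rw [Finset.sum_add_distrib, Finset.sum_neg_distrib]
      ring
    rw [e2, ← Finset.sum_add_distrib]
    exact Finset.sum_le_sum (fun x _ => pointwise x)
  -- step C
  have stepC : ∑ x, (m x * Real.log (q x) - m x * Real.log (m x)) ≤
      -((1 - d) * Real.log (1 - d)) := by
    rcases eq_or_lt_of_le hd1 with h | h
    · have hm_zero : ∀ x ∈ univ, m x = 0 := by
        have hs : ∑ x, m x = 0 := by rw [hsum_m, ← h]; ring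
        exact fun x hx => (Finset.sum_eq_zero_iff_of_nonneg (fun i _ => hm0 i)).1 hs x hx
      rw [Finset.sum_eq_zero (fun x hx => by rw [hm_zero x hx]; ring), ← h]
      simp
    · have h1d : 0 < 1 - d := by linarith
      have hc : 0 < (1 - d)⁻¹ := by positivity
      calc ∑ x, (m x * Real.log (q x) - m x * Real.log (m x))
          ≤ ∑ x, (m x * Real.log ((1 - d)⁻¹) + q x * (1 - d) - m x) := by
            apply Finset.sum_le_sum
            intro x _
            have ht := tangent (hm0 x) (hmq x) hc
            have hrw : q x / (1 - d)⁻¹ = q x * (1 - d) := by field_simp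
            rwa [hrw] at ht
        _ = (1 - d) * Real.log ((1 - d)⁻¹) + 1 * (1 - d) - (1 - d) := by
            rw [Finset.sum_sub_distrib, Finset.sum_add_distrib, ← Finset.sum_mul,
              ← Finset.sum_mul, hsum_m, hq1]
        _ = -((1 - d) * Real.log (1 - d)) := by rw [Real.log_inv]; ring
  -- step D
  have stepD : ∑ x, -((p x - m x) * Real.log (p x - m x)) ≤
      d * Real.log (n - 1) - d * Real.log d := by
    rcases eq_or_lt_of_le hd0 with h | h
    · have hu_zero : ∀ x ∈ univ, p x - m x = 0 := by
        have hs : ∑ x, (p x - m x) = 0 := by rw [hsum_u, ← h]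
        exact fun x hx => (Finset.sum_eq_zero_iff_of_nonneg
          (fun i _ => sub_nonneg.2 (hmp i))).1 hs x hx
      rw [Finset.sum_eq_zero (fun x hx => by rw [hu_zero x hx]; ring), ← h]
      ring_nf
      simp
    · obtain ⟨y, -, hy⟩ : ∃ y ∈ univ, q y - m y ≠ 0 :=
        Finset.exists_ne_zero_of_sum_ne_zero (by rw [hsum_v]; exact h.ne')
      have hvy : 0 < q y - m y := lt_of_le_of_ne (by linarith [hmq y]) (Ne.symm hy)
      have huy : p y - m y = 0 := by
        rcases min_cases (p y) (q y) with ⟨h1, _⟩ | ⟨h1, _⟩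
        · have : m y = p y := h1
          linarith
        · have : m y = q y := h1
          exfalso; rw [this] at hvy; linarith
      have hn1 : (0:ℝ) < n - 1 := by linarith
      have hc : 0 < (n - 1) / d := div_pos hn1 h
      have hsum_u_erase : ∑ x ∈ univ.erase y, (p x - m x) = d := by
        rw [Finset.sum_erase_eq_sub (Finset.mem_univ y), hsum_u, huy]; ring
      have hsplit : ∑ x, -((p x - m x) * Real.log (p x - m x)) =
          ∑ x ∈ univ.erase y, -((p x - m x) * Real.log (p x - m x)) := by
        rw [← Finset.add_sum_erase _ _ (Finset.mem_univ y), huy]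
        simp
      rw [hsplit]
      have hcard_erase : (((univ.erase y).card : ℕ) : ℝ) = n - 1 := by
        rw [Finset.card_erase_of_mem (Finset.mem_univ y), Finset.card_univ]
        have h1 : 1 ≤ Fintype.card α := by omega
        push_cast [Nat.cast_sub h1]
        ring
      calc ∑ x ∈ univ.erase y, -((p x - m x) * Real.log (p x - m x))
          ≤ ∑ x ∈ univ.erase y,
              ((p x - m x) * Real.log ((n - 1) / d) + 1 / ((n - 1) / d) - (p x - m x)) := by
            apply Finset.sum_le_sum
            intro x _
            have ht := tangent (sub_nonneg.2 (hmp x)) (hu_le1 x) hc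
            simpa using ht
        _ = d * Real.log ((n - 1) / d) +
              ((univ.erase y).card : ℝ) * (1 / ((n - 1) / d)) - d := by
            rw [Finset.sum_sub_distrib, Finset.sum_add_distrib, ← Finset.sum_mul,
              hsum_u_erase, Finset.sum_const, nsmul_eq_mul]
        _ = d * Real.log (n - 1) - d * Real.log d := by
            rw [hcard_erase, Real.log_div hn1.ne' h.ne']
            field_simp
            ring
  calc ent p - ent q
      ≤ (∑ x, -((p x - m x) * Real.log (p x - m x))) +
          ∑ x, (m x * Real.log (q x) - m x * Real.log (m x)) := main
    _ ≤ (d * Real.log (n - 1) - d * Real.log d) + -((1 - d) * Real.log (1 - d)) :=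
        add_le_add stepD stepC
    _ = d * Real.log (n - 1) + hb d := by rw [hb]; ring

/-- Entropy continuity bound (modified Csiszár–Körner Lemma 2.7):
for pmfs `p, q` on a finite alphabet with at least 2 elements,
`|H(p) - H(q)| ≤ d·log(|X| - 1) + h_b(d)` where `d = TV(p,q)`. -/
theorem entropy_tv_bound {α : Type*} [Fintype α]
    (p q : α → ℝ) (hp : IsPMF p) (hq : IsPMF q)
    (hcard : 2 ≤ Fintype.card α) :
    |ent p - ent q| ≤ TV p q * Real.log ((Fintype.card α : ℝ) - 1) + hb (TV p q) := by
  have h1 := key p q hp hq hcard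
  have h2 := key q p hq hp hcard
  have hTV : TV q p = TV p q := by simp [TV, abs_sub_comm]
  rw [hTV] at h2
  exact abs_sub_le_iff.2 ⟨h1, h2⟩
end

section
/- Let W^n = (W_1,...,W_n) and Z be discrete random variables on finite alphabets such that the total variation distance between their joint pmf p(w^n, z) and a conditionally-independent pmf p(z)·∏_{q=1}^n p̂_q(w_q | z) is less than ε < 1/2, for some family of conditional pmfs p̂_q. Then ∑_{q=1}^n I(W_q; W^{q-1} | Z) ≤ 2n(ε·log|W| + h_b(ε)). -/
open Finset

lemma ent_eq {α : Type*} [Fintype α] (p : α → ℝ) : ent p = ∑ a, Real.negMulLog (p a) := by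
  simp [ent, Real.negMulLog_eq_neg]

lemma hb_eq (t : ℝ) : hb t = Real.binEntropy t := by
  simp [hb, Real.binEntropy, Real.log_inv]; ring

lemma hb_nonneg {t : ℝ} (h0 : 0 ≤ t) (h1 : t ≤ 1) : 0 ≤ hb t := by
  rw [hb_eq]; exact Real.binEntropy_nonneg h0 h1

lemma hb_mono {a b : ℝ} (h0 : 0 ≤ a) (hab : a ≤ b) (hb2 : b ≤ 1/2) : hb a ≤ hb b := by
  rw [hb_eq, hb_eq]
  exact Real.binEntropy_strictMonoOn.monotoneOn ⟨h0, by norm_num; linarith⟩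
    ⟨by linarith, by norm_num; linarith⟩ hab

lemma hb_concave : ConcaveOn ℝ (Set.Icc (0:ℝ) 1) hb := by
  have : hb = Real.binEntropy := funext hb_eq
  rw [this]
  exact Real.strictConcave_binEntropy.concaveOn

lemma sub_one_le_mul_log {y : ℝ} (hy : 0 ≤ y) : y - 1 ≤ y * Real.log y := by
  rcases eq_or_lt_of_le hy with h | h
  · simp [← h]
  · have h2 := Real.log_le_sub_one_of_pos (inv_pos.2 h)
    rw [Real.log_inv] at h2
    have h3 := mul_le_mul_of_nonneg_left h2 h.le
    rw [mul_sub, mul_inv_cancel₀ h.ne'] at h3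
    nlinarith

lemma ent_nonneg {α : Type*} [Fintype α] {p : α → ℝ} (hp : IsPMF p) : 0 ≤ ent p := by
  rw [ent_eq]
  refine Finset.sum_nonneg fun a _ => Real.negMulLog_nonneg (hp.1 a) ?_
  calc p a ≤ ∑ b, p b := Finset.single_le_sum (fun b _ => hp.1 b) (mem_univ a)
    _ = 1 := hp.2

lemma ent_le_log_card {α : Type*} [Fintype α] [Nonempty α] {p : α → ℝ} (hp : IsPMF p) :
    ent p ≤ Real.log (Fintype.card α) := by
  set d : ℝ := (Fintype.card α : ℝ) with hd
  have hdpos : (0:ℝ) < d := Nat.cast_pos.mpr Fintype.card_pos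
  have key : ∀ a : α, p a - 1/d ≤ p a * Real.log (p a * d) := by
    intro a
    have h1 := sub_one_le_mul_log (mul_nonneg (hp.1 a) hdpos.le)
    refine (mul_le_mul_iff_of_pos_right hdpos).mp ?_
    have e1 : (p a - 1/d) * d = p a * d - 1 := by field_simp
    rw [e1, show p a * Real.log (p a * d) * d = p a * d * Real.log (p a * d) from by ring]
    exact h1
  have hzero : ∑ a : α, (p a - 1/d) = 0 := by
    rw [Finset.sum_sub_distrib, hp.2, Finset.sum_const, Finset.card_univ]
    have : (Fintype.card α : ℝ) * (1/d) = 1 := by field_simp; exact hd.symm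
    rw [nsmul_eq_mul, this, sub_self]
  have hsum : (0:ℝ) ≤ ∑ a, p a * Real.log (p a * d) := by
    have h := Finset.sum_le_sum (fun a (_ : a ∈ Finset.univ) => key a)
    linarith [hzero ▸ h]
  have hsplit : ∑ a, p a * Real.log (p a * d) = ∑ a, p a * Real.log (p a) + Real.log d := by
    have pt : ∀ a : α, p a * Real.log (p a * d) = p a * Real.log (p a) + p a * Real.log d := by
      intro a
      by_cases h : p a = 0
      · simp [h]
      · rw [Real.log_mul h hdpos.ne']; ring
    rw [Finset.sum_congr rfl (fun a _ => pt a), Finset.sum_add_distrib, ← Finset.sum_mul, hp.2,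
      one_mul]
  have : ent p = -∑ a, p a * Real.log (p a) := rfl
  linarith

lemma pushf_nonneg {Ω α : Type*} [Fintype Ω] [DecidableEq α] {μ : Ω → ℝ}
    (hμ : ∀ ω, 0 ≤ μ ω) (X : Ω → α) (a : α) : 0 ≤ pushf μ X a :=
  Finset.sum_nonneg fun ω _ => hμ ω

lemma pushf_isPMF {Ω α : Type*} [Fintype Ω] [Fintype α] [DecidableEq α] {μ : Ω → ℝ}
    (hμ : IsPMF μ) (X : Ω → α) : IsPMF (pushf μ X) := by
  refine ⟨pushf_nonneg hμ.1 X, ?_⟩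
  rw [← hμ.2]
  exact Finset.sum_fiberwise Finset.univ X μ

lemma TV_nonneg {α : Type*} [Fintype α] (p q : α → ℝ) : 0 ≤ TV p q := by
  unfold TV
  positivity

lemma TV_pushf_le {Ω α : Type*} [Fintype Ω] [Fintype α] [DecidableEq α]
    (μ ν : Ω → ℝ) (X : Ω → α) : TV (pushf μ X) (pushf ν X) ≤ TV μ ν := by
  unfold TV
  have key : ∑ a, |pushf μ X a - pushf ν X a| ≤ ∑ ω, |μ ω - ν ω| := by
    rw [← Finset.sum_fiberwise Finset.univ X (fun ω => |μ ω - ν ω|)]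
    refine Finset.sum_le_sum fun a _ => ?_
    unfold pushf
    rw [← Finset.sum_sub_distrib]
    exact Finset.abs_sum_le_sum_abs _ _
  linarith

lemma Hent_comp_inj {Ω α β : Type*} [Fintype Ω] [Fintype α] [Fintype β]
    [DecidableEq α] [DecidableEq β] (μ : Ω → ℝ) (X : Ω → α) {g : α → β}
    (hg : Function.Injective g) : Hent μ (fun ω => g (X ω)) = Hent μ X := by
  unfold Hent
  rw [ent_eq, ent_eq]
  have hpush : ∀ a, pushf μ (fun ω => g (X ω)) (g a) = pushf μ X a := by
    intro a; unfold pushf; congr 1; ext ω; simp [hg.eq_iff]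
  rw [← Finset.sum_subset (Finset.subset_univ (Finset.univ.image g))]
  · rw [Finset.sum_image (fun x _ y _ h => hg h)]
    exact Finset.sum_congr rfl fun a _ => by rw [hpush a]
  · intro b _ hb
    have : Finset.univ.filter (fun ω => g (X ω) = b) = ∅ := by
      ext ω; simp only [Finset.mem_filter, Finset.mem_univ, true_and, Finset.notMem_empty,
        iff_false]
      intro h
      exact hb (Finset.mem_image.mpr ⟨X ω, Finset.mem_univ _, h⟩)
    rw [show pushf μ (fun ω => g (X ω)) b = 0 from by unfold pushf; rw [this]; simp,
      Real.negMulLog_zero]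

lemma pushf_id {Ω : Type*} [Fintype Ω] [DecidableEq Ω] (μ : Ω → ℝ) :
    pushf μ (fun ω => ω) = μ := by
  funext a
  unfold pushf
  simp [Finset.filter_eq']

lemma sum_pushf_pair {Ω α β : Type*} [Fintype Ω] [Fintype α] [Fintype β]
    [DecidableEq α] [DecidableEq β] (μ : Ω → ℝ) (A : Ω → α) (B : Ω → β) (b : β) :
    ∑ a, pushf μ (fun ω => (A ω, B ω)) (a, b) = pushf μ B b := by
  unfold pushf
  rw [← Finset.sum_fiberwise (Finset.univ.filter (fun ω => B ω = b)) A μ]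
  refine Finset.sum_congr rfl fun a _ => Finset.sum_congr ?_ fun _ _ => rfl
  ext ω
  simp [Prod.ext_iff, and_comm]

lemma hb_negMulLog (t : ℝ) : hb t = Real.negMulLog t + Real.negMulLog (1 - t) := by
  unfold hb Real.negMulLog; ring

lemma hb_zero : hb 0 = 0 := by simp [hb]

lemma hb_one : hb 1 = 0 := by simp [hb]

lemma pmf_le_one {α : Type*} [Fintype α] {p : α → ℝ} (hp : IsPMF p) (a : α) : p a ≤ 1 := by
  calc p a ≤ ∑ b, p b := Finset.single_le_sum (fun b _ => hp.1 b) (Finset.mem_univ a)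
    _ = 1 := hp.2

lemma negMulLog_add_le {x y : ℝ} (hx : 0 ≤ x) (hy : 0 ≤ y) :
    Real.negMulLog (x + y) ≤ Real.negMulLog x + Real.negMulLog y := by
  unfold Real.negMulLog
  have h1 : x * Real.log x ≤ x * Real.log (x + y) := by
    rcases eq_or_lt_of_le hx with h | h
    · simp [← h]
    · exact mul_le_mul_of_nonneg_left (Real.log_le_log h (by linarith)) hx
  have h2 : y * Real.log y ≤ y * Real.log (x + y) := by
    rcases eq_or_lt_of_le hy with h | h
    · simp [← h]
    · exact mul_le_mul_of_nonneg_left (Real.log_le_log h (by linarith)) hy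
  nlinarith

lemma ent_mix_le {α : Type*} [Fintype α] {a b : α → ℝ} (ha : IsPMF a) (hbb : IsPMF b)
    {δ : ℝ} (h0 : 0 ≤ δ) (h1 : δ ≤ 1) :
    ent (fun i => (1 - δ) * a i + δ * b i) ≤ (1 - δ) * ent a + δ * ent b + hb δ := by
  rw [ent_eq, ent_eq, ent_eq, hb_negMulLog]
  have pt : ∀ i : α, Real.negMulLog ((1 - δ) * a i + δ * b i) ≤
      a i * Real.negMulLog (1 - δ) + (1 - δ) * Real.negMulLog (a i)
        + (b i * Real.negMulLog δ + δ * Real.negMulLog (b i)) := by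
    intro i
    calc Real.negMulLog ((1 - δ) * a i + δ * b i)
        ≤ Real.negMulLog ((1 - δ) * a i) + Real.negMulLog (δ * b i) :=
          negMulLog_add_le (mul_nonneg (by linarith) (ha.1 i)) (mul_nonneg h0 (hbb.1 i))
      _ = _ := by rw [Real.negMulLog_mul, Real.negMulLog_mul]
  calc ∑ i, Real.negMulLog ((1 - δ) * a i + δ * b i)
      ≤ ∑ i, (a i * Real.negMulLog (1 - δ) + (1 - δ) * Real.negMulLog (a i)
        + (b i * Real.negMulLog δ + δ * Real.negMulLog (b i))) :=
        Finset.sum_le_sum fun i _ => pt i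
    _ = (∑ i, a i) * Real.negMulLog (1 - δ) + (1 - δ) * ∑ i, Real.negMulLog (a i)
        + ((∑ i, b i) * Real.negMulLog δ + δ * ∑ i, Real.negMulLog (b i)) := by
        simp [Finset.sum_add_distrib, Finset.sum_mul, Finset.mul_sum]
    _ = (1 - δ) * ∑ i, Real.negMulLog (a i) + δ * ∑ i, Real.negMulLog (b i)
        + (Real.negMulLog δ + Real.negMulLog (1 - δ)) := by rw [ha.2, hbb.2]; ring

lemma le_ent_mix {α : Type*} [Fintype α] {a b : α → ℝ} (ha : IsPMF a) (hbb : IsPMF b)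
    {δ : ℝ} (h0 : 0 ≤ δ) (h1 : δ ≤ 1) :
    (1 - δ) * ent a + δ * ent b ≤ ent (fun i => (1 - δ) * a i + δ * b i) := by
  rw [ent_eq, ent_eq, ent_eq]
  rw [Finset.mul_sum, Finset.mul_sum, ← Finset.sum_add_distrib]
  refine Finset.sum_le_sum fun i _ => ?_
  have := Real.concaveOn_negMulLog.2 (Set.mem_Ici.mpr (ha.1 i)) (Set.mem_Ici.mpr (hbb.1 i))
    (by linarith : (0:ℝ) ≤ 1 - δ) h0 (by ring)
  simpa [smul_eq_mul] using this

lemma TV_comm {α : Type*} [Fintype α] (p q : α → ℝ) : TV p q = TV q p := by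
  unfold TV
  congr 1
  exact Finset.sum_congr rfl fun a _ => abs_sub_comm _ _

lemma TV_le_one {α : Type*} [Fintype α] {p q : α → ℝ} (hp : IsPMF p) (hq : IsPMF q) :
    TV p q ≤ 1 := by
  unfold TV
  have : ∑ a, |p a - q a| ≤ ∑ a, (p a + q a) :=
    Finset.sum_le_sum fun a _ => (abs_sub _ _).trans (by
      rw [abs_of_nonneg (hp.1 a), abs_of_nonneg (hq.1 a)])
  rw [Finset.sum_add_distrib, hp.2, hq.2] at this
  linarith

lemma min_eq_half (x y : ℝ) : min x y = (x + y - |x - y|) / 2 := by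
  rcases le_total x y with h | h
  · rw [min_eq_left h, abs_of_nonpos (by linarith)]; ring
  · rw [min_eq_right h, abs_of_nonneg (by linarith)]; ring

lemma fannes_aux {α : Type*} [Fintype α] [Nonempty α] {r s : α → ℝ}
    (hr : IsPMF r) (hs : IsPMF s) :
    ent r - ent s ≤ TV r s * Real.log (Fintype.card α) + hb (TV r s) := by
  set δ := TV r s with hδ
  have hδ0 : 0 ≤ δ := TV_nonneg r s
  have hδ1 : δ ≤ 1 := TV_le_one hr hs
  have hlog : 0 ≤ Real.log (Fintype.card α) :=
    Real.log_nonneg (by exact_mod_cast Fintype.card_pos)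
  rcases eq_or_lt_of_le hδ0 with h0 | h0
  · -- δ = 0 : r = s
    have : ∀ a, r a = s a := by
      intro a
      have hs0 : ∑ a, |r a - s a| = 0 := by
        have := hδ ▸ h0.symm
        unfold TV at this
        linarith
      have := (Finset.sum_eq_zero_iff_of_nonneg (fun a _ => abs_nonneg _)).mp hs0 a
        (Finset.mem_univ a)
      have := abs_eq_zero.mp this
      linarith
    have : r = s := funext this
    rw [this, ← h0, hb_zero]
    simp
  rcases eq_or_lt_of_le hδ1 with h1 | h1
  · -- δ = 1
    rw [h1, hb_one, one_mul]
    have := ent_le_log_card hr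
    have := ent_nonneg hs
    linarith
  -- 0 < δ < 1
  set m : α → ℝ := fun i => min (r i) (s i) with hm
  have hm_sum : ∑ i, m i = 1 - δ := by
    have : ∀ i, m i = (r i + s i - |r i - s i|) / 2 := fun i => min_eq_half _ _
    rw [Finset.sum_congr rfl fun i _ => this i]
    rw [← Finset.sum_div, Finset.sum_sub_distrib, Finset.sum_add_distrib, hr.2, hs.2]
    have : ∑ a, |r a - s a| = 2 * δ := by unfold δ; unfold TV; ring
    rw [this]; ring
  have hm_nonneg : ∀ i, 0 ≤ m i := fun i => le_min (hr.1 i) (hs.1 i)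
  have hmr : ∀ i, m i ≤ r i := fun i => min_le_left _ _
  have hms : ∀ i, m i ≤ s i := fun i => min_le_right _ _
  set mh : α → ℝ := fun i => m i / (1 - δ) with hmh
  set u : α → ℝ := fun i => (r i - m i) / δ with hu
  set v : α → ℝ := fun i => (s i - m i) / δ with hv
  have hmh_pmf : IsPMF mh := by
    constructor
    · intro i; exact div_nonneg (hm_nonneg i) (by linarith)
    · rw [← Finset.sum_div, hm_sum]
      exact div_self (by linarith)
  have hu_pmf : IsPMF u := by
    constructor
    · intro i; exact div_nonneg (by linarith [hmr i]) h0.le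
    · rw [← Finset.sum_div, Finset.sum_sub_distrib, hr.2, hm_sum]
      field_simp
      ring
  have hv_pmf : IsPMF v := by
    constructor
    · intro i; exact div_nonneg (by linarith [hms i]) h0.le
    · rw [← Finset.sum_div, Finset.sum_sub_distrib, hs.2, hm_sum]
      field_simp
      ring
  have h1δ : (1:ℝ) - δ ≠ 0 := by linarith
  have hr_mix : r = fun i => (1 - δ) * mh i + δ * u i := by
    funext i; show r i = (1 - δ) * (m i / (1 - δ)) + δ * ((r i - m i) / δ)
    field_simp
    ring
  have hs_mix : s = fun i => (1 - δ) * mh i + δ * v i := by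
    funext i; show s i = (1 - δ) * (m i / (1 - δ)) + δ * ((s i - m i) / δ)
    field_simp
    ring
  have hup : ent r ≤ (1 - δ) * ent mh + δ * ent u + hb δ := by
    rw [hr_mix]
    exact ent_mix_le hmh_pmf hu_pmf hδ0 hδ1
  have hlo : (1 - δ) * ent mh + δ * ent v ≤ ent s := by
    rw [hs_mix]
    exact le_ent_mix hmh_pmf hv_pmf hδ0 hδ1
  have h3 : ent u ≤ Real.log (Fintype.card α) := ent_le_log_card hu_pmf
  have h4 : 0 ≤ ent v := ent_nonneg hv_pmf
  nlinarith [mul_le_mul_of_nonneg_left h3 hδ0, mul_le_mul_of_nonneg_left h4 hδ0]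

lemma fannes {α : Type*} [Fintype α] [Nonempty α] {r s : α → ℝ}
    (hr : IsPMF r) (hs : IsPMF s) :
    |ent r - ent s| ≤ TV r s * Real.log (Fintype.card α) + hb (TV r s) := by
  rw [abs_sub_le_iff]
  refine ⟨fannes_aux hr hs, ?_⟩
  have := fannes_aux hs hr
  rw [TV_comm s r] at this
  exact this

lemma sum_negMulLog_scale {α : Type*} [Fintype α] {f : α → ℝ} {w : ℝ}
    (hf : ∀ a, 0 ≤ f a) (hsum : ∑ a, f a = w) :
    ∑ a, Real.negMulLog (f a) = Real.negMulLog w + w * ent (fun a => f a / w) := by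
  have hw : 0 ≤ w := hsum ▸ Finset.sum_nonneg fun a _ => hf a
  rcases eq_or_lt_of_le hw with h | h
  · have : ∀ a, f a = 0 := fun a =>
      (Finset.sum_eq_zero_iff_of_nonneg (fun a _ => hf a)).mp (hsum.trans h.symm) a
        (Finset.mem_univ a)
    simp [this, ← h]
  · have pt : ∀ a, Real.negMulLog (f a) =
        (f a / w) * Real.negMulLog w + w * Real.negMulLog (f a / w) := by
      intro a
      rw [← Real.negMulLog_mul]
      congr 1
      field_simp
    rw [Finset.sum_congr rfl fun a _ => pt a, Finset.sum_add_distrib, ← Finset.sum_mul,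
      ← Finset.mul_sum, ← Finset.sum_div, hsum, div_self h.ne', one_mul, ent_eq]

lemma cond_fannes {α ζ : Type*} [Fintype α] [Fintype ζ] {μ ν : α × ζ → ℝ}
    (hμ : IsPMF μ) (hν : IsPMF ν)
    (hmarg : ∀ z, ∑ a, μ (a, z) = ∑ a, ν (a, z)) {ε : ℝ}
    (hTV : TV μ ν ≤ ε) (hε : ε ≤ 1/2) :
    |ent μ - ent ν| ≤ ε * Real.log (Fintype.card α) + hb ε := by
  have hne : Nonempty (α × ζ) := by
    by_contra h
    rw [not_nonempty_iff] at h
    have := hμ.2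
    rw [Finset.univ_eq_empty, Finset.sum_empty] at this
    norm_num at this
  obtain ⟨x⟩ := hne
  haveI : Nonempty α := ⟨x.1⟩
  set L := Real.log (Fintype.card α) with hLdef
  have hL : 0 ≤ L := Real.log_nonneg (by exact_mod_cast Fintype.card_pos)
  set P : ζ → ℝ := fun z => ∑ a, μ (a, z) with hP
  have hP0 : ∀ z, 0 ≤ P z := fun z => Finset.sum_nonneg fun a _ => hμ.1 (a, z)
  have hP1 : ∑ z, P z = 1 := by
    calc ∑ z, P z = ∑ z, ∑ a, μ (a, z) := rfl
      _ = ∑ a, ∑ z, μ (a, z) := Finset.sum_comm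
      _ = ∑ x : α × ζ, μ x := (Fintype.sum_prod_type _).symm
      _ = 1 := hμ.2
  set c : ζ → α → ℝ := fun z a => μ (a, z) / P z with hc
  set d : ζ → α → ℝ := fun z a => ν (a, z) / P z with hd
  have hzero : ∀ z, P z = 0 → (∀ a, μ (a, z) = 0) ∧ (∀ a, ν (a, z) = 0) := by
    intro z hz
    have h1 : ∀ a, μ (a, z) = 0 := fun a =>
      (Finset.sum_eq_zero_iff_of_nonneg (fun a _ => hμ.1 (a, z))).mp hz a (Finset.mem_univ a)
    have h2 : ∀ a, ν (a, z) = 0 := fun a =>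
      (Finset.sum_eq_zero_iff_of_nonneg (fun a _ => hν.1 (a, z))).mp
        ((hmarg z) ▸ hz) a (Finset.mem_univ a)
    exact ⟨h1, h2⟩
  have hcz : ∀ z, 0 < P z → IsPMF (c z) ∧ IsPMF (d z) := by
    intro z hz
    constructor
    · exact ⟨fun a => div_nonneg (hμ.1 (a, z)) (hP0 z), by
        rw [show ∑ a, c z a = (∑ a, μ (a, z)) / P z from (Finset.sum_div _ _ _).symm]
        exact div_self hz.ne'⟩
    · exact ⟨fun a => div_nonneg (hν.1 (a, z)) (hP0 z), by
        rw [show ∑ a, d z a = (∑ a, ν (a, z)) / P z from (Finset.sum_div _ _ _).symm, ← hmarg z]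
        exact div_self hz.ne'⟩
  have decμ : ent μ = ∑ z, (Real.negMulLog (P z) + P z * ent (c z)) := by
    rw [ent_eq, Fintype.sum_prod_type, Finset.sum_comm]
    exact Finset.sum_congr rfl fun z _ =>
      sum_negMulLog_scale (fun a => hμ.1 (a, z)) rfl
  have decν : ent ν = ∑ z, (Real.negMulLog (P z) + P z * ent (d z)) := by
    rw [ent_eq, Fintype.sum_prod_type, Finset.sum_comm]
    exact Finset.sum_congr rfl fun z _ =>
      sum_negMulLog_scale (fun a => hν.1 (a, z)) (hmarg z).symm
  have hdiff : ent μ - ent ν = ∑ z, P z * (ent (c z) - ent (d z)) := by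
    rw [decμ, decν, ← Finset.sum_sub_distrib]
    exact Finset.sum_congr rfl fun z _ => by ring
  set δz : ζ → ℝ := fun z => TV (c z) (d z) with hδzdef
  have hδz0 : ∀ z, 0 ≤ δz z := fun z => TV_nonneg _ _
  have hcd_zero : ∀ z, P z = 0 → c z = d z := by
    intro z hz
    funext a
    rw [show c z a = μ (a, z) / P z from rfl, show d z a = ν (a, z) / P z from rfl,
      (hzero z hz).1 a, (hzero z hz).2 a]
  have hδz1 : ∀ z, δz z ≤ 1 := by
    intro z
    rcases eq_or_lt_of_le (hP0 z) with h | h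
    · rw [show δz z = TV (c z) (d z) from rfl, hcd_zero z h.symm]
      unfold TV
      simp
    · exact TV_le_one (hcz z h).1 (hcz z h).2
  have hTVz : ∑ z, P z * δz z = TV μ ν := by
    have per : ∀ z, P z * δz z = (∑ a, |μ (a, z) - ν (a, z)|) / 2 := by
      intro z
      rcases eq_or_lt_of_le (hP0 z) with h | h
      · have e : ∀ a, μ (a, z) - ν (a, z) = 0 := fun a => by
          rw [(hzero z h.symm).1 a, (hzero z h.symm).2 a]; ring
        rw [← h]
        simp [e]
      · have e : ∀ a, P z * |c z a - d z a| = |μ (a, z) - ν (a, z)| := by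
          intro a
          have e1 : P z * (c z a - d z a) = μ (a, z) - ν (a, z) := by
            show P z * (μ (a, z) / P z - ν (a, z) / P z) = _
            field_simp
          rw [← e1, abs_mul, abs_of_pos h]
        rw [show δz z = (∑ a, |c z a - d z a|) / 2 from rfl, ← mul_div_assoc,
          Finset.mul_sum, Finset.sum_congr rfl fun a _ => e a]
    rw [Finset.sum_congr rfl fun z _ => per z]
    unfold TV
    rw [Fintype.sum_prod_type, Finset.sum_comm, Finset.sum_div]
  have hbound : ∀ z, P z * |ent (c z) - ent (d z)| ≤ P z * (δz z * L + hb (δz z)) := by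
    intro z
    rcases eq_or_lt_of_le (hP0 z) with h | h
    · rw [← h]; simp
    · exact mul_le_mul_of_nonneg_left (fannes (hcz z h).1 (hcz z h).2) (hP0 z)
  calc |ent μ - ent ν| ≤ ∑ z, P z * |ent (c z) - ent (d z)| := by
        rw [hdiff]
        refine (Finset.abs_sum_le_sum_abs _ _).trans ?_
        refine Finset.sum_le_sum fun z _ => ?_
        rw [abs_mul, abs_of_nonneg (hP0 z)]
    _ ≤ ∑ z, P z * (δz z * L + hb (δz z)) := Finset.sum_le_sum fun z _ => hbound z
    _ = (∑ z, P z * δz z) * L + ∑ z, P z * hb (δz z) := by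
        simp only [mul_add, ← mul_assoc]
        rw [Finset.sum_add_distrib, ← Finset.sum_mul]
    _ ≤ (∑ z, P z * δz z) * L + hb (∑ z, P z * δz z) := by
        have jensen : ∑ z, P z * hb (δz z) ≤ hb (∑ z, P z * δz z) := by
          have := hb_concave.le_map_sum (t := Finset.univ) (w := P) (p := δz)
            (fun z _ => hP0 z) hP1 (fun z _ => ⟨hδz0 z, hδz1 z⟩)
          simpa [smul_eq_mul] using this
        linarith
    _ ≤ ε * L + hb ε := by
        rw [hTVz]
        have h1 : TV μ ν * L ≤ ε * L := mul_le_mul_of_nonneg_right hTV hL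
        have h2 : hb (TV μ ν) ≤ hb ε := hb_mono (TV_nonneg _ _) hTV hε
        linarith

lemma negMulLog_prod {ι : Type*} [DecidableEq ι] (s : Finset ι) (x : ι → ℝ) :
    Real.negMulLog (∏ i ∈ s, x i)
      = ∑ i ∈ s, (∏ j ∈ s.erase i, x j) * Real.negMulLog (x i) := by
  induction s using Finset.induction with
  | empty => simp
  | @insert a s ha ih =>
    rw [Finset.prod_insert ha, Real.negMulLog_mul, ih, Finset.sum_insert ha,
      Finset.erase_insert ha, Finset.mul_sum]
    congr 1
    refine Finset.sum_congr rfl fun i hi => ?_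
    rw [Finset.erase_insert_of_ne (show a ≠ i from fun h => ha (by rw [h]; exact hi)) ,
      Finset.prod_insert (fun h => ha (Finset.mem_of_mem_erase h))]
    ring

lemma sum_pi_prod_eq {n : ℕ} {𝒲 : Type*} [Fintype 𝒲] (g : Fin n → 𝒲 → ℝ) :
    ∑ f : Fin n → 𝒲, ∏ j, g j (f j) = ∏ j, ∑ w, g j w := by
  rw [← Fintype.piFinset_univ]
  exact Finset.sum_prod_piFinset _ _

lemma ent_prod_pi {n : ℕ} {𝒲 : Type*} [Fintype 𝒲] {t : Fin n → 𝒲 → ℝ}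
    (ht1 : ∀ q, ∑ w, t q w = 1) :
    ent (fun f : Fin n → 𝒲 => ∏ q, t q (f q)) = ∑ q, ent (t q) := by
  rw [ent_eq]
  calc ∑ f : Fin n → 𝒲, Real.negMulLog (∏ q, t q (f q))
      = ∑ f : Fin n → 𝒲, ∑ q, (∏ j ∈ Finset.univ.erase q, t j (f j))
          * Real.negMulLog (t q (f q)) :=
        Finset.sum_congr rfl fun f _ => negMulLog_prod _ _
    _ = ∑ q, ∑ f : Fin n → 𝒲, (∏ j ∈ Finset.univ.erase q, t j (f j))
          * Real.negMulLog (t q (f q)) := Finset.sum_comm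
    _ = ∑ q, ent (t q) := by
        refine Finset.sum_congr rfl fun q _ => ?_
        classical
        set g : Fin n → 𝒲 → ℝ :=
          fun j w => if j = q then Real.negMulLog (t q w) else t j w with hg
        have pt : ∀ f : Fin n → 𝒲,
            (∏ j ∈ Finset.univ.erase q, t j (f j)) * Real.negMulLog (t q (f q))
              = ∏ j, g j (f j) := by
          intro f
          rw [← Finset.mul_prod_erase Finset.univ (fun j => g j (f j)) (Finset.mem_univ q)]
          rw [show g q (f q) = Real.negMulLog (t q (f q)) from by simp [hg]]
          rw [Finset.prod_congr rfl fun j hj =>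
            show g j (f j) = t j (f j) from by simp [hg, Finset.ne_of_mem_erase hj]]
          ring
        rw [Finset.sum_congr rfl fun f _ => pt f, sum_pi_prod_eq]
        rw [Finset.prod_eq_single_of_mem q (Finset.mem_univ q) (fun j _ hj => by
          rw [Finset.sum_congr rfl fun w _ => show g j w = t j w from by simp [hg, hj]]
          exact ht1 j)]
        rw [Finset.sum_congr rfl fun w _ => show g q w = Real.negMulLog (t q w) from by
          simp [hg]]
        exact (ent_eq _).symm

lemma ent_mixture {α ζ : Type*} [Fintype α] [Fintype ζ] {p : ζ → ℝ} {c : ζ → α → ℝ}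
    (hc1 : ∀ z, ∑ a, c z a = 1) :
    ent (fun x : α × ζ => p x.2 * c x.2 x.1) = ent p + ∑ z, p z * ent (c z) := by
  rw [ent_eq, ent_eq, Fintype.sum_prod_type, Finset.sum_comm]
  rw [← Finset.sum_add_distrib]
  refine Finset.sum_congr rfl fun z _ => ?_
  have pt : ∀ a, Real.negMulLog (p z * c z a)
      = c z a * Real.negMulLog (p z) + p z * Real.negMulLog (c z a) := fun a =>
    Real.negMulLog_mul _ _
  rw [Finset.sum_congr rfl fun a _ => pt a, Finset.sum_add_distrib, ← Finset.sum_mul,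
    ← Finset.mul_sum, hc1 z, one_mul, ent_eq]

lemma pushf_snd_apply {α ζ : Type*} [Fintype α] [Fintype ζ] [DecidableEq ζ]
    (μ : α × ζ → ℝ) (z : ζ) : pushf μ Prod.snd z = ∑ a, μ (a, z) := by
  unfold pushf
  rw [Finset.sum_filter, Fintype.sum_prod_type]
  refine Finset.sum_congr rfl fun a _ => ?_
  simp

lemma sum_pi_prod_ite {n : ℕ} {𝒲 : Type*} [Fintype 𝒲] [DecidableEq 𝒲]
    (t : Fin n → 𝒲 → ℝ) (q : Fin n) (a : 𝒲) (h1 : ∀ j, ∑ w, t j w = 1) :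
    ∑ f : Fin n → 𝒲, (if f q = a then ∏ j, t j (f j) else 0) = t q a := by
  classical
  set g : Fin n → 𝒲 → ℝ :=
    fun j w => if j = q then (if w = a then t q w else 0) else t j w with hg
  have pt : ∀ f : Fin n → 𝒲,
      (if f q = a then ∏ j, t j (f j) else 0) = ∏ j, g j (f j) := by
    intro f
    by_cases h : f q = a
    · rw [if_pos h]
      refine Finset.prod_congr rfl fun j _ => ?_
      by_cases hj : j = q
      · subst hj; simp [hg, h]
      · simp [hg, hj]
    · rw [if_neg h]
      symm
      apply Finset.prod_eq_zero (Finset.mem_univ q)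
      simp [hg, h]
  rw [Finset.sum_congr rfl fun f _ => pt f, sum_pi_prod_eq]
  rw [Finset.prod_eq_single_of_mem q (Finset.mem_univ q) (fun j _ hj => by
    rw [Finset.sum_congr rfl fun w _ => show g j w = t j w from by simp [hg, hj]]
    exact h1 j)]
  rw [Finset.sum_congr rfl fun w _ => show g q w = if w = a then t q w else 0 from by
    simp [hg]]
  simp

lemma nu_marg {n : ℕ} {𝒲 ζ : Type*} [Fintype 𝒲] [Fintype ζ]
    (P : ζ → ℝ) (t : Fin n → 𝒲 → ζ → ℝ) (ht1 : ∀ q z, ∑ w, t q w z = 1) (z : ζ) :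
    ∑ w : Fin n → 𝒲, P z * ∏ j, t j (w j) z = P z := by
  rw [← Finset.mul_sum, sum_pi_prod_eq (fun j w => t j w z)]
  rw [Finset.prod_congr rfl fun j _ => ht1 j z]
  simp

lemma pushf_nu_pair {n : ℕ} {𝒲 ζ : Type*} [Fintype 𝒲] [Fintype ζ] [DecidableEq 𝒲]
    [DecidableEq ζ] (P : ζ → ℝ) (t : Fin n → 𝒲 → ζ → ℝ)
    (ht1 : ∀ q z, ∑ w, t q w z = 1) (q : Fin n) :
    pushf (fun wz : (Fin n → 𝒲) × ζ => P wz.2 * ∏ j, t j (wz.1 j) wz.2)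
      (fun ω => (ω.1 q, ω.2)) = fun az => P az.2 * t q az.1 az.2 := by
  funext az
  obtain ⟨a, z⟩ := az
  unfold pushf
  rw [Finset.sum_filter, Fintype.sum_prod_type]
  have step1 : ∀ w : Fin n → 𝒲,
      (∑ z' : ζ, if ((w q, z') = (a, z)) then P z' * ∏ j, t j (w j) z' else 0)
        = if w q = a then P z * ∏ j, t j (w j) z else 0 := by
    intro w
    by_cases h : w q = a
    · simp only [Prod.mk.injEq, h, true_and]
      rw [Finset.sum_ite_eq' Finset.univ z fun z' => P z' * ∏ j, t j (w j) z']
      simp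
    · simp [Prod.mk.injEq, h]
  rw [Finset.sum_congr rfl fun w _ => step1 w]
  have step2 : ∀ w : Fin n → 𝒲,
      (if w q = a then P z * ∏ j, t j (w j) z else 0)
        = P z * (if w q = a then ∏ j, t j (w j) z else 0) := by
    intro w; by_cases h : w q = a <;> simp [h]
  rw [Finset.sum_congr rfl fun w _ => step2 w, ← Finset.mul_sum,
    sum_pi_prod_ite (fun j w => t j w z) q a (fun j => ht1 j z)]

set_option maxHeartbeats 2000000 in
/-- Lemma on near-conditional-independence: if the joint pmf `μ` of
`(W^n, Z)` is within total variation `ε < 1/2` of `p(z)·∏_q p̂_q(w_q|z)` (where `p(z)`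
is the `Z`-marginal of `μ`), then `∑_q I(W_q; W^{q-1} | Z) ≤ 2n(ε·log|W| + h_b(ε))`. -/
theorem sum_condMI_prefix_bound {n : ℕ} {𝒲 𝒵 : Type*} [Fintype 𝒲] [Fintype 𝒵]
    [DecidableEq 𝒲] [DecidableEq 𝒵]
    (μ : (Fin n → 𝒲) × 𝒵 → ℝ) (phat : Fin n → 𝒲 → 𝒵 → ℝ) (ε : ℝ)
    (hμ : IsPMF μ)
    (hphat : ∀ q z, (∀ w, 0 ≤ phat q w z) ∧ ∑ w, phat q w z = 1)
    (hε : ε < 1/2)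
    (hTV : TV μ (fun wz => pushf μ Prod.snd wz.2 * ∏ q, phat q (wz.1 q) wz.2) < ε) :
    ∑ q : Fin n,
        condMI μ (fun ω => ω.1 q) Prod.snd
          (fun ω => fun j : Fin q.val => ω.1 (Fin.castLE q.isLt.le j))
      ≤ 2 * n * (ε * Real.log (Fintype.card 𝒲) + hb ε) := by
  classical
  rcases Nat.eq_zero_or_pos n with hn | hn
  · subst hn
    simp
  set P : 𝒵 → ℝ := pushf μ Prod.snd with hPdef
  set ν : (Fin n → 𝒲) × 𝒵 → ℝ :=
    fun wz => P wz.2 * ∏ q, phat q (wz.1 q) wz.2 with hνdef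
  have hP_pmf : IsPMF P := pushf_isPMF hμ Prod.snd
  have hμ_marg : ∀ z, ∑ w, μ (w, z) = P z := fun z => (pushf_snd_apply μ z).symm
  have hν_marg : ∀ z, ∑ w, ν (w, z) = P z := fun z =>
    nu_marg P (fun q w z => phat q w z) (fun q z => (hphat q z).2) z
  have hν_pmf : IsPMF ν := by
    constructor
    · intro wz
      exact mul_nonneg (pushf_nonneg hμ.1 _ _)
        (Finset.prod_nonneg fun j _ => (hphat j wz.2).1 _)
    · rw [Fintype.sum_prod_type, Finset.sum_comm]
      rw [Finset.sum_congr rfl fun z (_ : z ∈ Finset.univ) => hν_marg z]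
      exact hP_pmf.2
  have hTV2 : TV μ ν ≤ ε := hTV.le
  have hε0 : 0 ≤ ε := le_trans (TV_nonneg μ ν) hTV2
  have hεhalf : ε ≤ 1/2 := hε.le
  set L := Real.log (Fintype.card 𝒲) with hLdef
  -- the telescoping entropies
  set E : ℕ → ℝ := fun k => if h : k ≤ n then
      Hent μ (fun ω => ((fun j : Fin k => ω.1 (Fin.castLE h j)), ω.2)) else 0 with hEdef
  have hA : ∀ q : Fin n,
      Hent μ (fun ω => (ω.2, fun j : Fin q.val => ω.1 (Fin.castLE q.isLt.le j)))
        = E q.val := by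
    intro q
    simp only [hEdef]
    rw [dif_pos q.isLt.le]
    have h := Hent_comp_inj μ
      (fun ω : (Fin n → 𝒲) × 𝒵 =>
        ((fun j : Fin q.val => ω.1 (Fin.castLE q.isLt.le j)), ω.2))
      Prod.swap_injective
    convert h using 2
    rfl
  have hB : ∀ q : Fin n,
      Hent μ (fun ω => (ω.1 q, ω.2, fun j : Fin q.val => ω.1 (Fin.castLE q.isLt.le j)))
        = E (q.val + 1) := by
    intro q
    have hq1 : q.val + 1 ≤ n := q.isLt
    set g : (Fin (q.val+1) → 𝒲) × 𝒵 → 𝒲 × 𝒵 × (Fin q.val → 𝒲) :=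
      fun fz => (fz.1 ⟨q.val, Nat.lt_succ_self _⟩, fz.2,
        fun j => fz.1 ⟨j.val, Nat.lt_succ_of_lt j.isLt⟩) with hgdef
    have hginj : Function.Injective g := by
      rintro ⟨f, z⟩ ⟨f', z'⟩ hxy
      simp only [hgdef, Prod.mk.injEq] at hxy
      obtain ⟨h1, h2, h3⟩ := hxy
      refine Prod.ext ?_ h2
      show f = f'
      funext j
      rcases Nat.lt_succ_iff_lt_or_eq.mp j.isLt with hlt | heq
      · have hth := congrFun h3 ⟨j.val, hlt⟩
        have hj : (⟨j.val, Nat.lt_succ_of_lt hlt⟩ : Fin (q.val+1)) = j := Fin.ext rfl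
        rw [hj] at hth
        exact hth
      · have hj : j = ⟨q.val, Nat.lt_succ_self _⟩ := Fin.ext heq
        rw [hj]
        exact h1
    have h1 := Hent_comp_inj μ
      (fun ω : (Fin n → 𝒲) × 𝒵 =>
        ((fun j : Fin (q.val+1) => ω.1 (Fin.castLE hq1 j)), ω.2)) hginj
    simp only [hEdef]
    rw [dif_pos hq1]
    convert h1 using 2
    rfl
  have hC : E 0 = Hent μ Prod.snd := by
    simp only [hEdef]
    rw [dif_pos (Nat.zero_le n)]
    have heq : (fun (ω : (Fin n → 𝒲) × 𝒵) =>
        ((fun j : Fin 0 => ω.1 (Fin.castLE (Nat.zero_le n) j)), ω.2))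
        = fun ω => (((fun j : Fin 0 => j.elim0) : Fin 0 → 𝒲), Prod.snd ω) := by
      funext ω
      refine Prod.ext ?_ rfl
      exact Subsingleton.elim _ _
    rw [heq]
    have h := Hent_comp_inj μ Prod.snd
      (g := fun z : 𝒵 => (((fun j : Fin 0 => j.elim0) : Fin 0 → 𝒲), z))
      (fun a b h => by simpa using congrArg Prod.snd h)
    convert h using 2
  have hD : E n = ent μ := by
    simp only [hEdef]
    rw [dif_pos le_rfl]
    have heq : (fun (ω : (Fin n → 𝒲) × 𝒵) =>
        ((fun j : Fin n => ω.1 (Fin.castLE le_rfl j)), ω.2)) = fun ω => ω := rfl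
    rw [heq]
    show ent (pushf μ (fun ω => ω)) = ent μ
    rw [pushf_id]
  have htel : ∑ q : Fin n, (E q.val - E (q.val + 1)) = E 0 - E n := by
    rw [Fin.sum_univ_eq_sum_range (fun k => E k - E (k + 1)) n]
    exact Finset.sum_range_sub' E n
  have expand : ∀ q : Fin n,
      condMI μ (fun ω => ω.1 q) Prod.snd
          (fun ω => fun j : Fin q.val => ω.1 (Fin.castLE q.isLt.le j))
        = Hent μ (fun ω => (ω.1 q, ω.2)) + (E q.val - E (q.val + 1))
            - Hent μ Prod.snd := by
    intro q
    simp only [condMI]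
    rw [hA q, hB q]
    ring
  -- ν-side entropies
  have hpair_ν : ∀ q : Fin n, pushf ν (fun ω => (ω.1 q, ω.2))
      = fun az : 𝒲 × 𝒵 => P az.2 * phat q az.1 az.2 := fun q =>
    pushf_nu_pair P (fun j w z => phat j w z) (fun j z => (hphat j z).2) q
  have hGq : ∀ q : Fin n, ent (fun az : 𝒲 × 𝒵 => P az.2 * phat q az.1 az.2)
      = ent P + ∑ z, P z * ent (fun a => phat q a z) := fun q =>
    ent_mixture (p := P) (c := fun z a => phat q a z) (fun z => (hphat q z).2)
  have hprod1 : ∀ z, ∑ w : Fin n → 𝒲, ∏ j, phat j (w j) z = 1 := by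
    intro z
    rw [sum_pi_prod_eq (fun j w => phat j w z)]
    exact Finset.prod_eq_one fun j _ => (hphat j z).2
  have hν_ent : ent ν = ent P + ∑ z, P z * ∑ j, ent (fun a => phat j a z) := by
    have h1 := ent_mixture (p := P) (c := fun z (w : Fin n → 𝒲) => ∏ j, phat j (w j) z) hprod1
    calc ent ν = ent P + ∑ z, P z * ent (fun w : Fin n → 𝒲 => ∏ j, phat j (w j) z) := h1
      _ = ent P + ∑ z, P z * ∑ j, ent (fun a => phat j a z) := by
          refine congrArg _ (Finset.sum_congr rfl fun z _ => ?_)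
          rw [ent_prod_pi (fun j => (hphat j z).2)]
  have hbracket : ∑ q : Fin n, ent (pushf ν (fun ω => (ω.1 q, ω.2)))
      + ent P - ent ν - n * ent P = 0 := by
    have h2 : ∑ q : Fin n, ent (pushf ν (fun ω => (ω.1 q, ω.2)))
        = n * ent P + ∑ z, P z * ∑ j, ent (fun a => phat j a z) := by
      rw [Finset.sum_congr rfl fun q (_ : q ∈ Finset.univ) => by rw [hpair_ν q, hGq q]]
      rw [Finset.sum_add_distrib, Finset.sum_const, Finset.card_univ, Fintype.card_fin,
        nsmul_eq_mul]
      congr 1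
      rw [Finset.sum_comm]
      exact Finset.sum_congr rfl fun z _ => (Finset.mul_sum _ _ _).symm
    rw [h2, hν_ent]
    ring
  -- Fannes bounds
  have hDq : ∀ q : Fin n, |ent (pushf μ (fun ω => (ω.1 q, ω.2)))
      - ent (pushf ν (fun ω => (ω.1 q, ω.2)))| ≤ ε * L + hb ε := by
    intro q
    refine cond_fannes (pushf_isPMF hμ _) (pushf_isPMF hν_pmf _) ?_
      ((TV_pushf_le μ ν _).trans hTV2) hεhalf
    intro z
    rw [sum_pushf_pair μ (fun ω => ω.1 q) Prod.snd z,
        sum_pushf_pair ν (fun ω => ω.1 q) Prod.snd z]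
    rw [show pushf ν Prod.snd z = ∑ w, ν (w, z) from pushf_snd_apply ν z, hν_marg z]
  have hcard : Real.log (Fintype.card (Fin n → 𝒲)) = n * L := by
    rw [Fintype.card_fun, Fintype.card_fin, Nat.cast_pow, Real.log_pow]
  have hD2 : |ent μ - ent ν| ≤ ε * (n * L) + hb ε := by
    have h := cond_fannes hμ hν_pmf (fun z => (hμ_marg z).trans (hν_marg z).symm)
      hTV2 hεhalf
    rw [hcard] at h
    exact h
  -- assembling the identity
  have hmain : ∑ q : Fin n,
      condMI μ (fun ω => ω.1 q) Prod.snd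
        (fun ω => fun j : Fin q.val => ω.1 (Fin.castLE q.isLt.le j))
      = ∑ q : Fin n, (ent (pushf μ (fun ω => (ω.1 q, ω.2)))
          - ent (pushf ν (fun ω => (ω.1 q, ω.2)))) - (ent μ - ent ν) := by
    rw [Finset.sum_congr rfl fun q (_ : q ∈ Finset.univ) => expand q]
    have e1 : ∑ q : Fin n, (Hent μ (fun ω => (ω.1 q, ω.2)) + (E q.val - E (q.val + 1))
        - Hent μ Prod.snd)
        = ∑ q : Fin n, Hent μ (fun ω => (ω.1 q, ω.2)) + (E 0 - E n)
          - n * Hent μ Prod.snd := by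
      rw [Finset.sum_sub_distrib, Finset.sum_add_distrib, htel, Finset.sum_const,
        Finset.card_univ, Fintype.card_fin, nsmul_eq_mul]
    rw [e1, hC, hD]
    rw [Finset.sum_sub_distrib]
    have hHP : Hent μ Prod.snd = ent P := rfl
    have hHH : ∑ q : Fin n, Hent μ (fun ω => (ω.1 q, ω.2))
        = ∑ q : Fin n, ent (pushf μ (fun ω => (ω.1 q, ω.2))) := rfl
    rw [hHP, hHH]
    linarith [hbracket]
  rw [hmain]
  have hsumDq : ∑ q : Fin n, (ent (pushf μ (fun ω => (ω.1 q, ω.2)))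
      - ent (pushf ν (fun ω => (ω.1 q, ω.2)))) ≤ n * (ε * L + hb ε) := by
    calc ∑ q : Fin n, (ent (pushf μ (fun ω => (ω.1 q, ω.2)))
          - ent (pushf ν (fun ω => (ω.1 q, ω.2))))
        ≤ ∑ q : Fin n, |ent (pushf μ (fun ω => (ω.1 q, ω.2)))
          - ent (pushf ν (fun ω => (ω.1 q, ω.2)))| :=
          Finset.sum_le_sum fun q _ => le_abs_self _
      _ ≤ ∑ _q : Fin n, (ε * L + hb ε) := Finset.sum_le_sum fun q _ => hDq q
      _ = n * (ε * L + hb ε) := by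
          rw [Finset.sum_const, Finset.card_univ, Fintype.card_fin, nsmul_eq_mul]
  have habs : -(ent μ - ent ν) ≤ ε * (n * L) + hb ε :=
    le_trans (neg_le_abs _) hD2
  have hbε : 0 ≤ hb ε := hb_nonneg hε0 (by linarith)
  have hn1 : (1:ℝ) ≤ (n:ℝ) := by exact_mod_cast hn
  have hfin : (n:ℝ) * (ε * L + hb ε) + (ε * ((n:ℝ) * L) + hb ε)
      ≤ 2 * (n:ℝ) * (ε * L + hb ε) := by
    nlinarith [mul_nonneg (sub_nonneg.mpr hn1) hbε]
  linarith [hsumDq, habs, hfin]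
end
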